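/- arXiv:2410.11313 — 3 statements merged into one kernel-verified Lean document; each statement's English description precedes it below -/
import Mathlib

section
/- Let G be a finite group, x ∈ G a rational element, and C the conjugacy class of x. Then every eigenvalue of the Cayley graph Cay(G, C ∪ C⁻¹) (equivalently Cay(G,C), since C is inverse-closed) is an integer; in particular, for each irreducible character χ of G, the value (|C|/χ(1)) · χ(x) is a rational integer. -/
open Finset
open scoped Classical

/-- A function `χ : G → ℂ` is an irreducible character of `G` if it is the character of a
simple (irreducible) finite-dimensional complex representation of `G`. -/
def IsIrrChar (G : Type) [Group G] (χ : G → ℂ) : Prop :=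
  ∃ V : FDRep ℂ G, CategoryTheory.Simple V ∧ χ = V.character

/-- An element `x` is rational if it is conjugate to `x ^ i` for every integer `i`
coprime to the order of `x`. -/
def IsRational {G : Type} [Group G] (x : G) : Prop :=
  ∀ i : ℤ, IsCoprime i (orderOf x : ℤ) → IsConj x (x ^ i)

/-- Real adjacency matrix of the Cayley graph `Cay(G, S)`: `u` and `v` are adjacent iff
`v = a * u` for some `a ∈ S`. -/
def cayAdjR (G : Type) [Group G] [DecidableEq G] (S : Finset G) : Matrix G G ℝ :=
  Matrix.of fun u v => if v * u⁻¹ ∈ S then 1 else 0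

/-- Complex adjacency matrix of the Cayley graph `Cay(G, S)`. -/
def cayAdjC (G : Type) [Group G] [DecidableEq G] (S : Finset G) : Matrix G G ℂ :=
  Matrix.of fun u v => if v * u⁻¹ ∈ S then 1 else 0

/-! ### Auxiliary lemmas -/

lemma aux_sum_pow {n : ℕ} (u : ℂ) (hu : u ^ n = 1) :
    ∑ j ∈ range n, u ^ j = if u = 1 then (n : ℂ) else 0 := by
  split_ifs with h
  · simp [h]
  · rw [geom_sum_eq h n, hu, sub_self, zero_div]

lemma aux_shift {α : Type*} [AddCommGroup α] (n : ℕ) (F : ℕ → α) (hF : ∀ j, F (j + n) = F j) :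
    ∑ j ∈ range n, F (j + 1) = ∑ j ∈ range n, F j := by
  have h1 : ∑ j ∈ range (n+1), F j = ∑ j ∈ range n, F (j+1) + F 0 := Finset.sum_range_succ' F n
  have h2 : ∑ j ∈ range (n+1), F j = ∑ j ∈ range n, F j + F n := Finset.sum_range_succ F n
  have h3 : F n = F 0 := by simpa using hF 0
  rw [h1, h3] at h2
  exact add_right_cancel h2

/-- Spectral multiplicities: if `M ^ n = 1`, there are natural numbers `m k` with
`trace (M ^ i) = ∑ k, m k * ζ ^ (k * i)` for every `i`. -/
lemma aux_trace_pow {W : Type} [AddCommGroup W] [Module ℂ W] [FiniteDimensional ℂ W]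
    {n : ℕ} (hn : 0 < n) (M : Module.End ℂ W) (hM : M ^ n = 1)
    {ζ : ℂ} (hζ : IsPrimitiveRoot ζ n) :
    ∃ m : ℕ → ℕ, ∀ i : ℕ,
      LinearMap.trace ℂ W (M ^ i) = ∑ k ∈ range n, (m k : ℂ) * ζ ^ (k * i) := by
  have hζn : ζ ^ n = 1 := hζ.pow_eq_one
  have hζ0 : ζ ≠ 0 := hζ.ne_zero hn.ne'
  have hn0 : (n : ℂ) ≠ 0 := Nat.cast_ne_zero.mpr hn.ne'
  set S : ℕ → Module.End ℂ W := fun k => ∑ j ∈ range n, (ζ⁻¹) ^ (k * j) • M ^ j with hS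
  set P : ℕ → Module.End ℂ W := fun k => (n : ℂ)⁻¹ • S k with hPdef
  have hFper : ∀ k j, (ζ⁻¹) ^ (k * (j + n)) • M ^ (j + n) = (ζ⁻¹) ^ (k * j) • M ^ j := by
    intro k j
    have h1 : (ζ⁻¹) ^ (k * n) = 1 := by
      rw [inv_pow, mul_comm k n, pow_mul, hζn, one_pow, inv_one]
    rw [pow_add, hM, mul_one, Nat.mul_add, pow_add, h1, mul_one]
  have hMP : ∀ k, M * P k = ζ ^ k • P k := by
    intro k
    rw [hPdef]
    rw [mul_smul_comm, smul_comm]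
    congr 1
    rw [hS, Finset.mul_sum]
    have : ∀ j ∈ range n, M * ((ζ⁻¹) ^ (k * j) • M ^ j)
        = ζ ^ k • ((ζ⁻¹) ^ (k * (j+1)) • M ^ (j+1)) := by
      intro j _
      rw [mul_smul_comm, ← pow_succ']
      rw [smul_smul]
      congr 1
      rw [mul_add, mul_one, pow_add, ← mul_assoc, mul_comm (ζ ^ k), mul_assoc, ← mul_pow,
        mul_inv_cancel₀ hζ0, one_pow, mul_one]
    rw [Finset.sum_congr rfl this, ← Finset.smul_sum]
    congr 1
    exact aux_shift n (fun j => (ζ⁻¹) ^ (k * j) • M ^ j) (hFper k)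
  have hMjP : ∀ k j, M ^ j * P k = ζ ^ (k * j) • P k := by
    intro k j
    induction j with
    | zero => simp
    | succ j ih =>
      rw [pow_succ', mul_assoc, ih, mul_smul_comm, hMP, smul_smul]
      rw [Nat.mul_add, pow_add, mul_one, mul_comm]
  have hidem : ∀ k, P k * P k = P k := by
    intro k
    conv_lhs => rw [hPdef]
    rw [smul_mul_assoc]
    rw [hS, Finset.sum_mul]
    have : ∀ j ∈ range n, ((ζ⁻¹) ^ (k * j) • M ^ j) * P k = P k := by
      intro j _
      rw [smul_mul_assoc, hMjP, smul_smul, inv_pow, inv_mul_cancel₀ (pow_ne_zero _ hζ0),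
        one_smul]
    rw [Finset.sum_congr rfl this, Finset.sum_const, card_range]
    rw [← Nat.cast_smul_eq_nsmul ℂ, smul_smul, inv_mul_cancel₀ hn0, one_smul]
  have hproj : ∀ k, LinearMap.IsProj (LinearMap.range (P k)) (P k) := by
    intro k
    refine ⟨fun w => LinearMap.mem_range_self _ w, ?_⟩
    rintro w ⟨v, rfl⟩
    have := congrArg (fun (f : Module.End ℂ W) => f v) (hidem k)
    simpa [Module.End.mul_apply] using this
  refine ⟨fun k => Module.finrank ℂ (LinearMap.range (P k)), fun i => ?_⟩
  have htr : ∀ k, LinearMap.trace ℂ W (P k)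
      = (Module.finrank ℂ (LinearMap.range (P k)) : ℂ) := fun k => (hproj k).trace
  have hsum : ∑ k ∈ range n, ζ ^ (k * i) • P k = M ^ i := by
    have expand : ∀ k ∈ range n, ζ ^ (k * i) • P k
        = (n : ℂ)⁻¹ • ∑ j ∈ range n, ((ζ ^ i * ζ⁻¹ ^ j) ^ k) • M ^ j := by
      intro k _
      rw [hPdef, hS, smul_comm, Finset.smul_sum]
      congr 1
      refine Finset.sum_congr rfl fun j _ => ?_
      rw [smul_smul]
      congr 1
      rw [mul_pow, ← pow_mul, ← pow_mul, mul_comm i k, mul_comm j k]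
    rw [Finset.sum_congr rfl expand, ← Finset.smul_sum, Finset.sum_comm]
    have inner : ∀ j ∈ range n, ∑ k ∈ range n, ((ζ ^ i * ζ⁻¹ ^ j) ^ k) • M ^ j
        = (if i % n = j then (n : ℂ) else 0) • M ^ j := by
      intro j hj
      rw [← Finset.sum_smul]
      congr 1
      have h1 : (ζ ^ i) ^ n = 1 := by
        rw [← pow_mul, mul_comm, pow_mul, hζn, one_pow]
      have h2 : ((ζ⁻¹) ^ j) ^ n = 1 := by
        rw [← pow_mul, mul_comm, pow_mul, inv_pow, hζn, inv_one, one_pow]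
      have hu : (ζ ^ i * ζ⁻¹ ^ j) ^ n = 1 := by rw [mul_pow, h1, h2, one_mul]
      rw [aux_sum_pow _ hu]
      have hmod : ζ ^ i = ζ ^ (i % n) := by
        conv_lhs => rw [← Nat.mod_add_div i n, pow_add, pow_mul, hζn, one_pow, mul_one]
      have : (ζ ^ i * ζ⁻¹ ^ j = 1) ↔ (i % n = j) := by
        rw [inv_pow, mul_inv_eq_one₀ (pow_ne_zero _ hζ0), hmod]
        constructor
        · exact fun h => hζ.pow_inj (Nat.mod_lt i hn) (mem_range.mp hj) h
        · intro h; rw [h]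
      simp only [this]
    rw [Finset.sum_congr rfl inner]
    have : ∑ j ∈ range n, (if i % n = j then (n : ℂ) else 0) • M ^ j
        = (n : ℂ) • M ^ (i % n) := by
      rw [Finset.sum_eq_single_of_mem (i % n) (mem_range.mpr (Nat.mod_lt i hn))
        (fun j _ hne => by rw [if_neg (fun h => hne h.symm), zero_smul])]
      rw [if_pos rfl]
    rw [this, smul_smul, inv_mul_cancel₀ hn0, one_smul]
    conv_rhs => rw [← Nat.mod_add_div i n, pow_add, pow_mul, hM, one_pow, mul_one]
  rw [← hsum, map_sum]
  refine Finset.sum_congr rfl fun k _ => ?_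
  rw [map_smul, htr k, smul_eq_mul, mul_comm]

/-- Galois-theoretic rationality: a `ℕ`-combination of powers of a primitive root of unity
which is invariant under all coprime power substitutions is rational. -/
lemma aux_rat {n : ℕ} (hn : 0 < n) {ζ : ℂ} (hζ : IsPrimitiveRoot ζ n) (m : ℕ → ℕ) (t : ℂ)
    (h : ∀ i : ℕ, i.Coprime n → ∑ k ∈ range n, (m k : ℂ) * ζ ^ (k * i) = t) :
    ∃ q : ℚ, t = q := by
  haveI : NeZero n := ⟨hn.ne'⟩
  have h1 := h 1 (Nat.coprime_one_left n)
  rcases eq_or_lt_of_le (Nat.succ_le_of_lt hn) with heq | hlt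
  · refine ⟨(m 0 : ℚ), ?_⟩
    rw [← h1, ← heq]
    simp
  have hcongr : ∀ a b : ℕ, a ≡ b [MOD n] → ζ ^ a = ζ ^ b := by
    have hper : ∀ a : ℕ, ζ ^ a = ζ ^ (a % n) := by
      intro a
      conv_lhs => rw [← Nat.mod_add_div a n, pow_add, pow_mul, hζ.pow_eq_one, one_pow, mul_one]
    intro a b hab
    rw [hper a, hper b, hab]
  have hcop : ∀ a b : ℕ, a ≡ b [MOD n] → b.Coprime n → a.Coprime n := by
    intro a b hab hb
    have hg : Nat.gcd n a = Nat.gcd n b := by rw [Nat.gcd_rec n a, Nat.gcd_rec n b, hab]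
    unfold Nat.Coprime at *
    rw [Nat.gcd_comm] at hb ⊢
    rw [hg]; exact hb
  set N : ℕ+ := ⟨n, hn⟩ with hN
  set K := CyclotomicField n ℚ with hK
  haveI : IsCyclotomicExtension {n} ℚ K := by
    haveI : NeZero (n : ℚ) := ⟨Nat.cast_ne_zero.mpr hn.ne'⟩
    exact CyclotomicField.isCyclotomicExtension n ℚ
  haveI : IsGalois ℚ K := IsCyclotomicExtension.isGalois {n} ℚ K
  haveI : FiniteDimensional ℚ K := IsCyclotomicExtension.finiteDimensional {n} ℚ K
  set ζK : K := IsCyclotomicExtension.zeta n ℚ K with hζKdef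
  have hζK : IsPrimitiveRoot ζK n := IsCyclotomicExtension.zeta_spec n ℚ K
  set φ : K →ₐ[ℚ] ℂ := IsAlgClosed.lift with hφ
  have hφinj : Function.Injective φ := φ.toRingHom.injective
  have hφζ : IsPrimitiveRoot (φ ζK) n := hζK.map_of_injective hφinj
  obtain ⟨i₀, hi₀lt, hi₀cop, hi₀⟩ := (hζ.isPrimitiveRoot_iff).mp hφζ
  obtain ⟨j₀, -, hj₀⟩ := Nat.exists_mul_mod_eq_one_of_coprime hi₀cop hlt
  have hmod1 : i₀ * j₀ ≡ 1 [MOD n] := by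
    unfold Nat.ModEq
    rw [hj₀, Nat.mod_eq_of_lt hlt]
  set tK : K := ∑ k ∈ range n, (m k : K) * ζK ^ (k * j₀) with htK
  have hφtK : φ tK = t := by
    rw [htK, map_sum, ← h1]
    refine Finset.sum_congr rfl fun k _ => ?_
    rw [map_mul, map_pow, map_natCast, ← hi₀, ← pow_mul]
    congr 1
    refine hcongr _ _ ?_
    have he : i₀ * (k * j₀) = k * (i₀ * j₀) := by ring
    rw [he]
    simpa using Nat.ModEq.mul_left k hmod1
  have hfix : ∀ σ : K ≃ₐ[ℚ] K, σ tK = tK := by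
    intro σ
    have hσζ : IsPrimitiveRoot (σ ζK) n := hζK.map_of_injective σ.injective
    obtain ⟨iσ, hiσlt, hiσcop, hiσ⟩ := hζK.isPrimitiveRoot_iff.mp hσζ
    apply hφinj
    have hL : φ (σ tK) = ∑ k ∈ range n, (m k : ℂ) * ζ ^ (k * (i₀ * (iσ * j₀))) := by
      rw [htK, map_sum, map_sum]
      refine Finset.sum_congr rfl fun k _ => ?_
      have e1 : σ ((m k : K) * ζK ^ (k * j₀)) = (m k : K) * ζK ^ (iσ * (k * j₀)) := by
        rw [map_mul, map_natCast, map_pow, ← hiσ, ← pow_mul]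
      have e2 : φ ((m k : K) * ζK ^ (iσ * (k * j₀)))
          = (m k : ℂ) * ζ ^ (i₀ * (iσ * (k * j₀))) := by
        rw [map_mul, map_natCast, map_pow, ← hi₀, ← pow_mul]
      rw [e1, e2]
      congr 2
      ring
    have hd : (i₀ * (iσ * j₀)).Coprime n := by
      refine hcop _ iσ ?_ hiσcop
      have he : i₀ * (iσ * j₀) = iσ * (i₀ * j₀) := by ring
      rw [he]
      simpa using Nat.ModEq.mul_left iσ hmod1
    rw [hL, hφtK, h _ hd]
  have hmem : tK ∈ IntermediateField.fixedField
      (IntermediateField.fixingSubgroup (⊥ : IntermediateField ℚ K)) := by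
    intro g
    exact hfix g.1
  rw [IsGalois.fixedField_fixingSubgroup (⊥ : IntermediateField ℚ K)] at hmem
  obtain ⟨q, hq⟩ := IntermediateField.mem_bot.mp hmem
  refine ⟨q, ?_⟩
  rw [← hφtK, ← hq]
  rw [φ.commutes q]
  simp

/-- A rational algebraic integer in `ℂ` is an integer. -/
lemma aux_int (t : ℂ) (h1 : IsIntegral ℤ t) (h2 : ∃ q : ℚ, t = q) : ∃ m : ℤ, t = m := by
  obtain ⟨q, rfl⟩ := h2
  have h3 : IsIntegral ℤ q := by
    have hinj : Function.Injective (algebraMap ℚ ℂ) := (algebraMap ℚ ℂ).injective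
    refine (isIntegral_algebraMap_iff hinj).mp ?_
    simpa using h1
  obtain ⟨y, hy⟩ := IsIntegrallyClosed.isIntegral_iff.mp h3
  exact ⟨y, by rw [← hy]; simp⟩

/-- Traces of representations are conjugation-invariant. -/
lemma aux_conj_trace {G : Type} [Group G] {W : Type} [AddCommGroup W] [Module ℂ W]
    [FiniteDimensional ℂ W] (ρ : G →* (W →ₗ[ℂ] W)) {g h : G} (hgh : IsConj g h) :
    LinearMap.trace ℂ W (ρ g) = LinearMap.trace ℂ W (ρ h) := by
  obtain ⟨u, hu⟩ := hgh
  have : h = ↑u * g * ↑u⁻¹ := by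
    rw [SemiconjBy] at hu
    rw [hu]; simp
  have e : ρ (↑u * g * ↑u⁻¹) = ρ (↑u * g) * ρ ↑u⁻¹ := map_mul ρ _ _
  have e2 : (↑u⁻¹ * (↑u * g) : G) = g := by simp
  rw [this, e, LinearMap.trace_mul_comm, ← map_mul, e2]

/-- A monoid-hom image of a conjugation-closed sum is central. -/
lemma aux_comm {G : Type} [Group G] [Fintype G] [DecidableEq G] (x : G) (C : Finset G)
    (hC : ∀ g, g ∈ C ↔ IsConj x g) {R : Type*} [Ring R] (ρ : G →* R) (g : G) :
    ρ g * (∑ a ∈ C, ρ a) = (∑ a ∈ C, ρ a) * ρ g := by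
  have hmem : ∀ h : G, ∀ a ∈ C, h * a * h⁻¹ ∈ C := by
    intro h a ha
    rw [hC] at ha ⊢
    exact ha.trans (isConj_iff.mpr ⟨h, rfl⟩)
  rw [Finset.mul_sum, Finset.sum_mul]
  have h1 : ∀ a ∈ C, ρ g * ρ a = ρ (g * a) := fun a _ => (map_mul ρ g a).symm
  have h2 : ∀ a ∈ C, ρ a * ρ g = ρ (a * g) := fun a _ => (map_mul ρ a g).symm
  rw [Finset.sum_congr rfl h1, Finset.sum_congr rfl h2]
  refine Finset.sum_nbij' (fun a => g * a * g⁻¹) (fun a => g⁻¹ * a * g)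
    (fun a ha => hmem g a ha) (fun a ha => by simpa using hmem g⁻¹ a ha)
    (fun a _ => by group) (fun a _ => by group) (fun a _ => ?_)
  congr 1
  group

/-- Key arithmetic lemma: if the class sum acts as the scalar `c`, then `c` is an integer,
and `c` is related to the trace by `|C| · tr ρ(x) = c · dim`. -/
lemma aux_core {G : Type} [Group G] [Fintype G] [DecidableEq G]
    (x : G) (hrat : IsRational x) (C : Finset G) (hC : ∀ g, g ∈ C ↔ IsConj x g)
    {W : Type} [AddCommGroup W] [Module ℂ W] [FiniteDimensional ℂ W] [Nontrivial W]
    (ρ : G →* (W →ₗ[ℂ] W)) (c : ℂ)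
    (hT : ∑ a ∈ C, ρ a = c • (1 : Module.End ℂ W)) :
    (∃ m : ℤ, c = m) ∧
      (C.card : ℂ) * LinearMap.trace ℂ W (ρ x) = c * (Module.finrank ℂ W : ℂ) := by
  set n := orderOf x with hn_def
  have hn : 0 < n := orderOf_pos x
  set ζ : ℂ := Complex.exp (2 * Real.pi * Complex.I / n) with hζdef
  have hζ : IsPrimitiveRoot ζ n := Complex.isPrimitiveRoot_exp n hn.ne'
  have hM : (ρ x : Module.End ℂ W) ^ n = 1 := by
    rw [← map_pow, pow_orderOf_eq_one, map_one]
  obtain ⟨mf, hmf⟩ := aux_trace_pow hn (ρ x) hM hζ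
  set t : ℂ := LinearMap.trace ℂ W (ρ x) with ht_def
  have htr : (C.card : ℂ) * t = c * (Module.finrank ℂ W : ℂ) := by
    have h1 : LinearMap.trace ℂ W (∑ a ∈ C, ρ a) = ∑ a ∈ C, LinearMap.trace ℂ W (ρ a) :=
      map_sum _ _ _
    have h2 : ∀ a ∈ C, LinearMap.trace ℂ W (ρ a) = t :=
      fun a ha => (aux_conj_trace ρ ((hC a).mp ha)).symm
    rw [Finset.sum_congr rfl h2, Finset.sum_const, nsmul_eq_mul] at h1
    rw [← h1, hT, map_smul, LinearMap.trace_one, smul_eq_mul]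
  refine ⟨?_, htr⟩
  have hfix : ∀ i : ℕ, i.Coprime n → ∑ k ∈ range n, (mf k : ℂ) * ζ ^ (k * i) = t := by
    intro i hi
    rw [← hmf i, ← map_pow]
    have hconj : IsConj x (x ^ i) := by
      have := hrat (i : ℤ) (Nat.isCoprime_iff_coprime.mpr hi)
      rwa [zpow_natCast] at this
    exact (aux_conj_trace ρ hconj).symm
  have hq : ∃ q : ℚ, t = q := aux_rat hn hζ mf t hfix
  have hζint : IsIntegral ℤ ζ := by
    refine ⟨Polynomial.X ^ n - Polynomial.C 1, Polynomial.monic_X_pow_sub_C 1 hn.ne', ?_⟩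
    simp [hζ.pow_eq_one]
  have htint : IsIntegral ℤ t := by
    have h1 := hmf 1
    simp only [pow_one, mul_one] at h1
    rw [ht_def, h1]
    refine IsIntegral.sum _ fun k _ => IsIntegral.mul ?_ (hζint.pow k)
    have hcast : ((mf k : ℕ) : ℂ) = algebraMap ℤ ℂ (mf k) := by push_cast; ring
    rw [hcast]
    exact isIntegral_algebraMap
  obtain ⟨a, hat⟩ := aux_int t htint hq
  have hcint : IsIntegral ℤ c := by
    set S : Subalgebra ℤ (Module.End ℂ W) := Algebra.adjoin ℤ (Set.range ⇑ρ) with hS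
    have hfg : (Subalgebra.toSubmodule S).FG := by
      rw [hS, Algebra.adjoin_eq_span]
      have hcl : (Submonoid.closure (Set.range ⇑ρ)) = MonoidHom.mrange ρ := by
        rw [← MonoidHom.coe_mrange, Submonoid.closure_eq]
      rw [hcl, MonoidHom.coe_mrange]
      exact Submodule.fg_span (Set.finite_range _)
    have hTin : (∑ a ∈ C, ρ a) ∈ S :=
      Subalgebra.sum_mem S fun a _ => Algebra.subset_adjoin ⟨a, rfl⟩
    have hTint : IsIntegral ℤ (∑ a ∈ C, ρ a) := IsIntegral.of_mem_of_fg S hfg _ hTin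
    have halg : algebraMap ℂ (Module.End ℂ W) c = c • (1 : Module.End ℂ W) := by
      ext w
      simp [Module.algebraMap_end_apply]
    have hinj : Function.Injective (algebraMap ℂ (Module.End ℂ W)) := by
      intro a b hab
      obtain ⟨w, hw⟩ := exists_ne (0 : W)
      have := congrArg (fun (f : Module.End ℂ W) => f w) hab
      simp only [Module.algebraMap_end_apply] at this
      exact smul_left_injective ℂ hw this
    rw [hT, ← halg] at hTint
    exact (isIntegral_algebraMap_iff hinj).mp hTint
  have hd0 : (Module.finrank ℂ W : ℂ) ≠ 0 :=
    Nat.cast_ne_zero.mpr (Module.finrank_pos).ne'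
  have hcq : ∃ q : ℚ, c = q := by
    refine ⟨(C.card * a : ℚ) / (Module.finrank ℂ W : ℚ), ?_⟩
    have : c = (C.card : ℂ) * t / (Module.finrank ℂ W : ℂ) := by
      field_simp [htr]
      exact htr.symm
    rw [this, hat]
    push_cast
    ring
  exact aux_int c hcint hcq

open CategoryTheory in
lemma aux_nontrivial {G : Type} [Group G] (V : FDRep ℂ G) [Simple V] :
    Nontrivial V := by
  by_contra h
  rw [not_nontrivial_iff_subsingleton] at h
  have h0 : (𝟙 V : V ⟶ V) = 0 := by
    ext v
    exact @Subsingleton.elim _ h _ _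
  exact CategoryTheory.id_nonzero V h0

open CategoryTheory in
lemma aux_schur {G : Type} [Group G] (V : FDRep ℂ G) [Simple V]
    (T : V →ₗ[ℂ] V) (hcomm : ∀ g : G, V.ρ g * T = T * V.ρ g) :
    ∃ c : ℂ, T = c • (1 : Module.End ℂ V) := by
  let f : V ⟶ V := ⟨FGModuleCat.ofHom T, by
    intro g
    ext v
    exact congrArg (fun (S : Module.End ℂ V) => S v) (hcomm g).symm⟩
  obtain ⟨c, hc⟩ := CategoryTheory.endomorphism_simple_eq_smul_id ℂ f
  refine ⟨c, ?_⟩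
  have := congrArg Action.Hom.hom hc
  ext v
  exact (congrArg (fun S => S.hom.hom v) this).symm

/-- The left-translation representation of `G` on `G → ℂ`. -/
def lamRep (G : Type) [Group G] : G →* ((G → ℂ) →ₗ[ℂ] (G → ℂ)) where
  toFun g :=
    { toFun := fun f u => f (g⁻¹ * u)
      map_add' := fun f h => rfl
      map_smul' := fun c f => rfl }
  map_one' := by
    ext f u
    simp
  map_mul' g h := by
    ext f u
    simp [mul_assoc]

theorem rational_cayley_integral_eigenvalues {G : Type} [Group G] [Fintype G] [DecidableEq G]
    (x : G) (hrat : IsRational x)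
    (C : Finset G) (hC : ∀ g, g ∈ C ↔ IsConj x g)
    (Irr : Finset (G → ℂ)) (hIrr : ∀ χ, χ ∈ Irr ↔ IsIrrChar G χ) :
    (∀ η ∈ spectrum ℂ (cayAdjC G C), ∃ m : ℤ, η = m) ∧
    ∀ χ ∈ Irr, ∃ m : ℤ, (C.card : ℂ) / χ 1 * χ x = m := by
  have hCinv : ∀ a : G, a ∈ C ↔ a⁻¹ ∈ C := by
    have hxinv : IsConj x x⁻¹ := by
      have := hrat (-1) ⟨-1, 0, by ring⟩
      rwa [zpow_neg_one] at this
    have fwd : ∀ a : G, a ∈ C → a⁻¹ ∈ C := by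
      intro a ha
      rw [hC] at ha ⊢
      obtain ⟨g, hg⟩ := isConj_iff.mp ha
      refine hxinv.trans (isConj_iff.mpr ⟨g, ?_⟩)
      rw [← hg]
      group
    intro a
    exact ⟨fwd a, fun h => by simpa using fwd a⁻¹ h⟩
  constructor
  · -- eigenvalues are integers
    intro η hη
    have hdet : (algebraMap ℂ (Matrix G G ℂ) η - cayAdjC G C).det = 0 := by
      by_contra hd
      exact (spectrum.mem_iff.mp hη)
        ((Matrix.isUnit_iff_isUnit_det _).mpr (isUnit_iff_ne_zero.mpr hd))
    obtain ⟨v, hv0, hv⟩ := Matrix.exists_mulVec_eq_zero_iff.mpr hdet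
    have hAv : (cayAdjC G C).mulVec v = η • v := by
      rw [Matrix.sub_mulVec, Algebra.algebraMap_eq_smul_one, Matrix.smul_mulVec,
        Matrix.one_mulVec, sub_eq_zero] at hv
      exact hv.symm
    set T : Module.End ℂ (G → ℂ) := ∑ a ∈ C, lamRep G a with hTdef
    have hTapp : ∀ f : G → ℂ, T f = (cayAdjC G C).mulVec f := by
      intro f
      funext u
      have h1 : T f u = ∑ a ∈ C, f (a⁻¹ * u) := by
        rw [hTdef, LinearMap.coe_sum, Finset.sum_apply, Finset.sum_apply]
        rfl
      have h2 : (cayAdjC G C).mulVec f u = ∑ a ∈ C, f (a * u) := by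
        have : (cayAdjC G C).mulVec f u
            = ∑ w : G, (if w * u⁻¹ ∈ C then 1 else 0) * f w := rfl
        rw [this]
        have e1 : ∑ w : G, (if w * u⁻¹ ∈ C then 1 else 0) * f w
            = ∑ w ∈ Finset.univ.filter (fun w => w * u⁻¹ ∈ C), f w := by
          rw [Finset.sum_filter]
          refine Finset.sum_congr rfl fun w _ => ?_
          rw [ite_mul, one_mul, zero_mul]
        rw [e1]
        refine Finset.sum_nbij' (fun w => w * u⁻¹) (fun a => a * u) ?_ ?_ ?_ ?_ ?_
        · intro w hw
          exact (Finset.mem_filter.mp hw).2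
        · intro a ha
          simp only [Finset.mem_filter, Finset.mem_univ, true_and]
          simpa using ha
        · intro w _
          group
        · intro a _
          group
        · intro w hw
          congr 1
          group
      rw [h1, h2]
      refine Finset.sum_nbij' (fun a => a⁻¹) (fun a => a⁻¹) ?_ ?_ ?_ ?_ ?_
      · intro a ha; exact (hCinv a).mp ha
      · intro a ha; exact (hCinv a).mp ha
      · intro a _; simp
      · intro a _; simp
      · intro a _; simp
    have hvE : T v - η • v = 0 := by
      rw [hTapp v, hAv, sub_self]
    set E : Submodule ℂ (G → ℂ) :=
      LinearMap.ker (T - η • (1 : Module.End ℂ (G → ℂ))) with hEdef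
    have hmemE : ∀ f : G → ℂ, f ∈ E ↔ T f - η • f = 0 := by
      intro f
      rw [hEdef, LinearMap.mem_ker]
      constructor <;> intro h <;> simpa using h
    have hvmem : v ∈ E := (hmemE v).mpr hvE
    haveI : Nontrivial E := by
      refine ⟨⟨⟨v, hvmem⟩, 0, fun h => hv0 ?_⟩⟩
      simpa using congrArg Subtype.val h
    have hstable : ∀ g : G, ∀ f ∈ E, lamRep G g f ∈ E := by
      intro g f hf
      rw [hmemE] at hf ⊢
      have hcm := aux_comm x C hC (lamRep G) g
      have : T (lamRep G g f) = lamRep G g (T f) := by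
        have := congrArg (fun (S : Module.End ℂ (G → ℂ)) => S f) hcm
        simpa [hTdef, Module.End.mul_apply] using this.symm
      rw [this, ← map_smul, ← map_sub, hf, map_zero]
    set ρ' : G →* (E →ₗ[ℂ] E) :=
      { toFun := fun g => (lamRep G g).restrict (hstable g)
        map_one' := by
          ext f
          simp [LinearMap.restrict_apply]
        map_mul' := fun g h => by
          ext f
          simp [LinearMap.restrict_apply, Module.End.mul_apply] } with hρ'
    have hT' : ∑ a ∈ C, ρ' a = η • (1 : Module.End ℂ E) := by
      refine LinearMap.ext fun f => ?_
      have hval : ((∑ a ∈ C, ρ' a) f : G → ℂ) = ∑ a ∈ C, lamRep G a (f : G → ℂ) := by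
        rw [LinearMap.coe_sum, Finset.sum_apply]
        rw [Submodule.coe_sum]
        refine Finset.sum_congr rfl fun a _ => ?_
        simp [hρ', LinearMap.restrict_apply]
      have hTf : T (f : G → ℂ) = η • (f : G → ℂ) := by
        have := (hmemE (f : G → ℂ)).mp f.2
        rw [sub_eq_zero] at this
        exact this
      have : ((∑ a ∈ C, ρ' a) f : G → ℂ) = η • (f : G → ℂ) := by
        rw [hval]
        rw [← hTf]
        rw [hTdef, LinearMap.coe_sum, Finset.sum_apply]
      apply Subtype.ext
      rw [this]
      simp
    obtain ⟨⟨m, hm⟩, -⟩ := aux_core x hrat C hC ρ' η hT'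
    exact ⟨m, hm⟩
  · -- character values
    intro χ hχ
    obtain ⟨V, hsimp, hcheq⟩ := (hIrr χ).mp hχ
    haveI := hsimp
    haveI : Nontrivial V := aux_nontrivial V
    have hcomm : ∀ g : G, V.ρ g * (∑ a ∈ C, V.ρ a) = (∑ a ∈ C, V.ρ a) * V.ρ g :=
      fun g => aux_comm x C hC V.ρ g
    obtain ⟨c, hc⟩ := aux_schur V (∑ a ∈ C, V.ρ a) hcomm
    obtain ⟨⟨m, hm⟩, htr⟩ := aux_core x hrat C hC V.ρ c hc
    refine ⟨m, ?_⟩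
    rw [hcheq]
    have hch1 : V.character 1 = (Module.finrank ℂ V : ℂ) := V.char_one
    have hchx : V.character x = LinearMap.trace ℂ V (V.ρ x) := rfl
    have hd0 : (Module.finrank ℂ V : ℂ) ≠ 0 :=
      Nat.cast_ne_zero.mpr (Module.finrank_pos).ne'
    rw [hchx, hch1, ← hm]
    rw [div_mul_eq_mul_div, div_eq_iff hd0]
    exact htr
end

section
/- Let G be a finite group and x ∈ G a non-vanishing element whose conjugacy class C is closed under inversion and all of whose associated character values χ(x) are rational. Then the adjacency matrix of the normal Cayley graph Cay(G,C) is non-singular. -/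
open Finset
open scoped Classical

open CategoryTheory in
/-- If a finite-dimensional representation has no nontrivial invariant subspaces,
it is simple as an object of `FDRep ℂ G`. -/
lemma simple_of_invariant' {G : Type} [Group G]
    (X : Type) [AddCommGroup X] [Module ℂ X] [FiniteDimensional ℂ X] [Nontrivial X]
    (ρ : Representation ℂ G X)
    (hinvar : ∀ p : Submodule ℂ X, (∀ (g : G), ∀ v ∈ p, ρ g v ∈ p) → p = ⊥ ∨ p = ⊤) :
    Simple (FDRep.of ρ) := by
  constructor
  intro Y f hMono
  constructor
  · intro hIso h0
    rw [h0] at hIso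
    have h1 : 𝟙 (FDRep.of ρ) = 0 := by
      rw [← IsIso.inv_hom_id (0 : Y ⟶ FDRep.of ρ), Limits.comp_zero]
    obtain ⟨v, hv⟩ := exists_ne (0 : X)
    have h2 := LinearMap.congr_fun (congrArg (fun φ => φ.hom.hom.hom) h1) v
    simp only [Action.id_hom, Action.zero_hom] at h2
    exact hv (by simpa using h2)
  · intro hne
    have hcomm : ∀ (g : G) (y : Y.V), f.hom (Y.ρ g y) = ρ g (f.hom y) := by
      intro g y
      exact ConcreteCategory.congr_hom ((forget (FGModuleCat ℂ)).congr_map (f.comm g)) y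
    have hker : LinearMap.ker (f.hom.hom.hom : Y.V →ₗ[ℂ] X) = ⊥ := by
      by_contra hK
      obtain ⟨y, hyK, hy0⟩ := (Submodule.ne_bot_iff _).mp hK
      set K := LinearMap.ker (f.hom.hom.hom : Y.V →ₗ[ℂ] X) with hKdef
      have hstab : ∀ (g : G), ∀ z ∈ K, Y.ρ g z ∈ K := by
        intro g z hz
        have hz' : f.hom z = 0 := hz
        have : f.hom (Y.ρ g z) = 0 := by rw [hcomm g z, hz', map_zero]
        exact this
      let ρK : Representation ℂ G K :=
        { toFun := fun g => (Y.ρ g).restrict (fun z hz => hstab g z hz)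
          map_one' := by
            apply LinearMap.ext; intro z; apply Subtype.ext
            show Y.ρ 1 z.1 = z.1
            rw [map_one]; rfl
          map_mul' := by
            intro g h
            apply LinearMap.ext; intro z; apply Subtype.ext
            show Y.ρ (g * h) z.1 = Y.ρ g (Y.ρ h z.1)
            rw [map_mul]; rfl }
      let ι : FDRep.of ρK ⟶ Y :=
        { hom := ConcreteCategory.ofHom (K.subtype : K →ₗ[ℂ] Y.V)
          comm := by intro g; ext z; rfl }
      have hcomp : ι ≫ f = 0 := by
        apply Action.hom_ext
        rw [Action.comp_hom, Action.zero_hom]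
        ext z
        show f.hom.hom.hom (K.subtype z) = 0
        exact z.2
      have hι0 : ι = 0 := Limits.zero_of_comp_mono f hcomp
      have h3 := LinearMap.congr_fun (congrArg (fun φ => φ.hom.hom.hom) hι0) ⟨y, hyK⟩
      simp only [Action.zero_hom] at h3
      exact hy0 (by simp [ι] at h3; exact h3)
    have hstab' : ∀ (g : G), ∀ v ∈ LinearMap.range (f.hom.hom.hom : Y.V →ₗ[ℂ] X),
        ρ g v ∈ LinearMap.range (f.hom.hom.hom : Y.V →ₗ[ℂ] X) := by
      rintro g v ⟨y, rfl⟩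
      exact ⟨Y.ρ g y, (hcomm g y)⟩
    have hrange : LinearMap.range (f.hom.hom.hom : Y.V →ₗ[ℂ] X) = ⊤ := by
      rcases hinvar (LinearMap.range (f.hom.hom.hom : Y.V →ₗ[ℂ] X)) hstab' with h | h
      · exfalso
        apply hne
        have hf0 : (f.hom.hom.hom : Y.V →ₗ[ℂ] X) = 0 := LinearMap.range_eq_bot.mp h
        apply Action.hom_ext
        rw [Action.zero_hom]
        exact FGModuleCat.hom_ext hf0
      · exact h
    let e : (Y.V : Type) ≃ₗ[ℂ] X :=
      LinearEquiv.ofBijective (f.hom.hom.hom : Y.V →ₗ[ℂ] X)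
        ⟨LinearMap.ker_eq_bot.mp hker, LinearMap.range_eq_top.mp hrange⟩
    let finv : FDRep.of ρ ⟶ Y :=
      { hom := ConcreteCategory.ofHom (e.symm : X →ₗ[ℂ] Y.V)
        comm := by
          intro g
          ext v
          apply e.injective
          show e (e.symm (ρ g v)) = e (Y.ρ g (e.symm v))
          rw [e.apply_symm_apply,
            show e (Y.ρ g (e.symm v)) = ρ g (e (e.symm v)) from hcomm g (e.symm v),
            e.apply_symm_apply] }
    refine ⟨⟨finv, ?_, ?_⟩⟩
    · apply Action.hom_ext
      ext y
      show e.symm (e y) = y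
      exact e.symm_apply_apply y
    · apply Action.hom_ext
      ext v
      show e (e.symm v) = v
      exact e.apply_symm_apply v

theorem nonvanishing_adjacency_nonsingular {G : Type} [Group G] [Fintype G] [DecidableEq G]
    (x : G)
    (Irr : Finset (G → ℂ)) (hIrr : ∀ χ, χ ∈ Irr ↔ IsIrrChar G χ)
    (hnv : ∀ χ ∈ Irr, χ x ≠ 0)
    (hratval : ∀ χ ∈ Irr, ∃ q : ℚ, χ x = q)
    (C : Finset G) (hC : ∀ g, g ∈ C ↔ IsConj x g) (hinv : ∀ g ∈ C, g⁻¹ ∈ C) :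
    (cayAdjC G C).det ≠ 0 := by
  haveI : NeZero ((Fintype.card G : ℂ)) := ⟨Nat.cast_ne_zero.mpr Fintype.card_ne_zero⟩
  haveI fdR : FiniteDimensional ℂ (MonoidAlgebra ℂ G) :=
    Module.Finite.equiv (MonoidAlgebra.coeffLinearEquiv ℂ).symm
  set c : MonoidAlgebra ℂ G := ∑ a ∈ C, MonoidAlgebra.single a 1 with hc
  -- the class sum is central
  have hcentral : ∀ r : MonoidAlgebra ℂ G, c * r = r * c := by
    intro r
    refine MonoidAlgebra.induction_on (motive := fun r => c * r = r * c) r ?_ ?_ ?_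
    · intro g
      rw [MonoidAlgebra.of_apply, hc, Finset.sum_mul, Finset.mul_sum]
      simp only [MonoidAlgebra.single_mul_single, mul_one, one_mul]
      refine Finset.sum_nbij' (fun a => g⁻¹ * a * g) (fun a => g * a * g⁻¹) ?_ ?_ ?_ ?_ ?_
      · intro a ha
        rw [hC] at ha ⊢
        exact ha.trans (isConj_iff.mpr ⟨g⁻¹, by group⟩)
      · intro a ha
        rw [hC] at ha ⊢
        exact ha.trans (isConj_iff.mpr ⟨g, by group⟩)
      · intro a ha; group
      · intro a ha; group
      · intro a ha
        congr 1
        group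
    · intro f1 f2 h1 h2
      rw [mul_add, add_mul, h1, h2]
    · intro r f1 h1
      rw [mul_smul_comm, smul_mul_assoc, h1]
  -- the annihilator of the class sum is trivial
  have hinj : ∀ v : MonoidAlgebra ℂ G, c * v = 0 → v = 0 := by
    intro v hv
    by_contra hv0
    let W : Submodule (MonoidAlgebra ℂ G) (MonoidAlgebra ℂ G) :=
      { carrier := {w | c * w = 0}
        add_mem' := by
          intro a b ha hb
          show c * (a + b) = 0
          rw [mul_add, ha, hb, add_zero]
        zero_mem' := by show c * 0 = 0; rw [mul_zero]
        smul_mem' := by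
          intro r w hw
          show c * (r • w) = 0
          rw [smul_eq_mul, ← mul_assoc, hcentral r, mul_assoc, hw, mul_zero] }
    have hvW : v ∈ W := hv
    rcases IsSemisimpleModule.eq_bot_or_exists_simple_le W with h | ⟨S, hSW, hS⟩
    · rw [h] at hvW; exact hv0 (by simpa using hvW)
    haveI := hS
    haveI : FiniteDimensional ℂ S := FiniteDimensional.of_injective
      ({ toFun := Subtype.val, map_add' := fun a b => rfl,
         map_smul' := fun r s => rfl } : S →ₗ[ℂ] MonoidAlgebra ℂ G)
      Subtype.val_injective
    haveI : Nontrivial S := IsSimpleModule.nontrivial (MonoidAlgebra ℂ G) S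
    let ρ := Representation.ofModule' (k := ℂ) (G := G) S
    have hρ : ∀ (g : G) (s : S), ρ g s = (MonoidAlgebra.single g (1:ℂ)) • s := by
      intro g s
      simp [ρ, Representation.ofModule', MonoidAlgebra.lift_symm_apply]
    have hsimple : CategoryTheory.Simple (FDRep.of ρ) := by
      apply simple_of_invariant'
      intro p hp
      let q : Submodule (MonoidAlgebra ℂ G) S :=
        { carrier := p
          add_mem' := fun ha hb => p.add_mem ha hb
          zero_mem' := p.zero_mem
          smul_mem' := by
            intro r s hs
            refine MonoidAlgebra.induction_on
              (motive := fun r => r • s ∈ (p : Set S)) r ?_ ?_ ?_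
            · intro g
              have := hp g s hs
              rw [hρ] at this
              simpa [MonoidAlgebra.of_apply] using this
            · intro f1 f2 h1 h2
              rw [add_smul]; exact p.add_mem h1 h2
            · intro r' f1 h1
              rw [smul_assoc]
              exact p.smul_mem r' h1 }
      rcases eq_bot_or_eq_top q with h | h
      · left
        rw [Submodule.eq_bot_iff]
        intro s hs
        have hsq : s ∈ q := hs
        rw [h] at hsq
        simpa using hsq
      · right
        rw [Submodule.eq_top_iff']
        intro s
        have hsq : s ∈ q := by rw [h]; exact Submodule.mem_top
        exact hsq
    set χ : G → ℂ := (FDRep.of ρ).character with hχ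
    have hχIrr : χ ∈ Irr := (hIrr χ).mpr ⟨FDRep.of ρ, hsimple, rfl⟩
    have hzero : (∑ a ∈ C, ρ a) = (0 : S →ₗ[ℂ] S) := by
      apply LinearMap.ext; intro s; apply Subtype.ext
      have hs0 : c * (s : MonoidAlgebra ℂ G) = 0 := hSW s.2
      have : (((∑ a ∈ C, ρ a) s : S) : MonoidAlgebra ℂ G)
          = c * (s : MonoidAlgebra ℂ G) := by
        rw [LinearMap.sum_apply]
        rw [show (((∑ a ∈ C, ρ a s : S)) : MonoidAlgebra ℂ G)
            = ∑ a ∈ C, ((ρ a s : S) : MonoidAlgebra ℂ G) from S.coe_sum _ _]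
        rw [hc, Finset.sum_mul]
        refine Finset.sum_congr rfl ?_
        intro a ha
        rw [hρ]
        rfl
      rw [hs0] at this
      simpa using this
    have hsum0 : ∑ a ∈ C, χ a = 0 := by
      have h1 : ∀ a : G, χ a = LinearMap.trace ℂ S (ρ a) := fun a => rfl
      calc ∑ a ∈ C, χ a = ∑ a ∈ C, LinearMap.trace ℂ S (ρ a) := by
            exact Finset.sum_congr rfl fun a _ => h1 a
        _ = LinearMap.trace ℂ S (∑ a ∈ C, ρ a) := (map_sum _ _ _).symm
        _ = 0 := by rw [hzero, map_zero]
    have hconst : ∀ a ∈ C, χ a = χ x := by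
      intro a ha
      obtain ⟨h, hh⟩ := isConj_iff.mp ((hC a).mp ha)
      rw [← hh]
      exact FDRep.char_conj (FDRep.of ρ) x h
    have hmul0 : (C.card : ℂ) * χ x = 0 := by
      rw [← hsum0, Finset.sum_congr rfl hconst, Finset.sum_const, nsmul_eq_mul]
    have hxC : x ∈ C := (hC x).mpr (IsConj.refl x)
    have hcard : (C.card : ℂ) ≠ 0 :=
      Nat.cast_ne_zero.mpr (Finset.card_ne_zero_of_mem hxC)
    rcases mul_eq_zero.mp hmul0 with h | h
    · exact hcard h
    · exact hnv χ hχIrr h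
  -- translate to the determinant
  let b : Module.Basis G ℂ (MonoidAlgebra ℂ G) := MonoidAlgebra.basis G ℂ
  let L : MonoidAlgebra ℂ G →ₗ[ℂ] MonoidAlgebra ℂ G := LinearMap.mulLeft ℂ c
  have hmat : LinearMap.toMatrix b b L = (cayAdjC G C).transpose := by
    ext i j
    rw [LinearMap.toMatrix_apply]
    have hb : b.repr (L (b j)) = (c * MonoidAlgebra.single j (1 : ℂ)).coeff := rfl
    rw [hb, MonoidAlgebra.coeff_mul_single_apply, mul_one, hc]
    rw [show ((∑ a ∈ C, MonoidAlgebra.single a (1:ℂ)).coeff (i * j⁻¹))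
        = ∑ a ∈ C, (MonoidAlgebra.single a (1:ℂ)).coeff (i * j⁻¹) by
      rw [MonoidAlgebra.coeff_sum, Finsupp.finset_sum_apply]]
    simp only [MonoidAlgebra.coeff_single, Finsupp.single_apply]
    rw [Finset.sum_ite_eq' C (i * j⁻¹) (fun _ => (1:ℂ))]
    simp [cayAdjC, Matrix.transpose_apply]
  have hLinj : Function.Injective L := by
    rw [← LinearMap.ker_eq_bot, Submodule.eq_bot_iff]
    intro v hv
    exact hinj v (by simpa [L, LinearMap.mulLeft_apply] using hv)
  have hLsurj : Function.Surjective L := LinearMap.injective_iff_surjective.mp hLinj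
  have hdetL : IsUnit (LinearMap.det L) := by
    have := LinearEquiv.isUnit_det' (LinearEquiv.ofBijective L ⟨hLinj, hLsurj⟩)
    exact this
  have htr : (cayAdjC G C).transpose.det ≠ 0 := by
    rw [← hmat, LinearMap.det_toMatrix]
    exact hdetL.ne_zero
  rw [Matrix.det_transpose] at htr
  exact htr
end

section
/- Let G be a finite group. Then ∑_{χ ∈ Irr(G)} χ(1) ≤ |G| / √|C|, where C is any conjugacy class of G containing a rational non-vanishing element. -/
open Finset
open scoped Classical

noncomputable section


lemma geom_sum_rootOfUnity {n : ℕ} {z : ℂ} (hz : z ^ n = 1) :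
    ∑ i ∈ range n, z ^ i = if z = 1 then (n : ℂ) else 0 := by
  split_ifs with h
  · simp [h]
  · rw [geom_sum_eq h n, hz, sub_self, zero_div]

open Complex in
/-- Character values at powers of `g` are power sums of roots of unity with
natural-number multiplicities. -/
lemma char_pow_repr {G : Type} [Group G] [Fintype G] (V : FDRep ℂ G) (g : G) :
    ∃ (d : ℕ → ℂ) (t : ℕ → ℕ), (∀ j, d j ^ orderOf g = 1) ∧
      ∀ k : ℕ, V.character (g ^ k) = ∑ j ∈ range (orderOf g), (t j : ℂ) * d j ^ k := by
  set n := orderOf g with hn_def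
  have hn : 0 < n := orderOf_pos g
  have hnC : (n : ℂ) ≠ 0 := Nat.cast_ne_zero.mpr hn.ne'
  obtain ⟨ζ, hζ⟩ : ∃ ζ : ℂ, IsPrimitiveRoot ζ n :=
    ⟨Complex.exp (2 * Real.pi * Complex.I / n), Complex.isPrimitiveRoot_exp n hn.ne'⟩
  have hζn : ζ ^ n = 1 := hζ.pow_eq_one
  set d : ℕ → ℂ := fun j => ζ ^ j with hd_def
  have hdn : ∀ j, d j ^ n = 1 := fun j => by
    rw [hd_def]; rw [← pow_mul, mul_comm, pow_mul, hζn, one_pow]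
  have hdne : ∀ j, d j ≠ 0 := fun j h => by
    have := hdn j; rw [h, zero_pow hn.ne'] at this; exact zero_ne_one this
  set A : Module.End ℂ V := V.ρ g with hA_def
  have hAn : A ^ n = 1 := by
    rw [hA_def, ← map_pow, hn_def, pow_orderOf_eq_one, map_one]
  set P : ℕ → Module.End ℂ V := fun j =>
    (n : ℂ)⁻¹ • ∑ i ∈ range n, (d j ^ i)⁻¹ • A ^ i with hP_def
  -- A * P j = d j • P j
  have hAP : ∀ j, A * P j = d j • P j := by
    intro j
    set c := d j with hc
    have hcn : c ^ n = 1 := hdn j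
    have hcne : c ≠ 0 := hdne j
    have hF : ∀ i : ℕ, c * (c ^ (i + 1))⁻¹ = (c ^ i)⁻¹ := fun i => by
      rw [pow_succ, mul_inv_rev, ← mul_assoc, mul_inv_cancel₀ hcne, one_mul]
    set F : ℕ → Module.End ℂ V := fun m => (c * (c ^ m)⁻¹) • A ^ m with hFdef
    have hF0n : F n = F 0 := by simp [hFdef, hcn, hAn]
    have sum_shift : ∑ i ∈ range n, (c ^ i)⁻¹ • A ^ (i + 1)
        = c • ∑ i ∈ range n, (c ^ i)⁻¹ • A ^ i := by
      have h1 : ∑ i ∈ range n, (c ^ i)⁻¹ • A ^ (i + 1) = ∑ i ∈ range n, F (i + 1) := by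
        refine Finset.sum_congr rfl fun i _ => ?_
        rw [hFdef]; dsimp only; rw [hF i]
      have h2 : ∑ i ∈ range n, F (i + 1) + F 0 = ∑ i ∈ range n, F i + F n := by
        rw [← Finset.sum_range_succ', Finset.sum_range_succ]
      rw [hF0n] at h2
      have h3 : ∑ i ∈ range n, F (i + 1) = ∑ i ∈ range n, F i := add_right_cancel h2
      rw [h1, h3, Finset.smul_sum]
      exact Finset.sum_congr rfl fun i _ => (smul_smul c _ _).symm
    rw [hP_def]
    dsimp only
    rw [mul_smul_comm, Finset.mul_sum]
    have : ∀ i ∈ range n, A * ((c ^ i)⁻¹ • A ^ i) = (c ^ i)⁻¹ • A ^ (i + 1) := by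
      intro i _
      rw [mul_smul_comm, ← pow_succ']
    rw [Finset.sum_congr rfl this, sum_shift, smul_comm]
  -- A ^ k * P j = d j ^ k • P j
  have hAkP : ∀ j k, A ^ k * P j = d j ^ k • P j := by
    intro j k
    induction k with
    | zero => simp
    | succ k ih =>
      rw [pow_succ', mul_assoc, ih, mul_smul_comm, hAP j, smul_smul, ← pow_succ]
  -- ∑ j, P j = 1
  have hsumP : ∑ j ∈ range n, P j = 1 := by
    rw [hP_def]
    dsimp only
    rw [← Finset.smul_sum, Finset.sum_comm]
    have : ∀ i ∈ range n, ∑ j ∈ range n, (d j ^ i)⁻¹ • A ^ i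
        = (if i = 0 then (n : ℂ) else 0) • A ^ i := by
      intro i hi
      rw [← Finset.sum_smul]
      congr 1
      have hw : ∀ j, (d j ^ i)⁻¹ = ((ζ ^ i)⁻¹) ^ j := fun j => by
        rw [hd_def]; dsimp only; rw [← pow_mul, mul_comm, pow_mul, inv_pow]
      rw [Finset.sum_congr rfl fun j _ => hw j]
      have hwn : ((ζ ^ i)⁻¹) ^ n = 1 := by
        rw [inv_pow, ← pow_mul, mul_comm, pow_mul, hζn, one_pow, inv_one]
      rw [geom_sum_rootOfUnity hwn]
      have : (ζ ^ i)⁻¹ = 1 ↔ i = 0 := by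
        rw [inv_eq_one, hζ.pow_eq_one_iff_dvd]
        constructor
        · intro h; exact Nat.eq_zero_of_dvd_of_lt h (mem_range.mp hi)
        · rintro rfl; exact dvd_zero n
      simp [this]
    rw [Finset.sum_congr rfl this]
    have : ∑ i ∈ range n, (if i = 0 then (n : ℂ) else 0) • A ^ i
        = ∑ i ∈ range n, (if i = 0 then (n : ℂ) • A ^ i else 0) := by
      refine Finset.sum_congr rfl fun i _ => ?_
      split_ifs <;> simp
    rw [this, Finset.sum_ite_eq' (range n) 0 (fun i => (n : ℂ) • A ^ i)]
    simp [mem_range.mpr hn, smul_smul, inv_mul_cancel₀ hnC]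
  -- P j is idempotent
  have hPP : ∀ j, P j * P j = P j := by
    intro j
    conv_lhs => rw [hP_def]
    dsimp only
    rw [smul_mul_assoc, Finset.sum_mul]
    have : ∀ i ∈ range n, ((d j ^ i)⁻¹ • A ^ i) * P j = P j := by
      intro i _
      rw [smul_mul_assoc, hAkP j i, smul_smul, inv_mul_cancel₀ (pow_ne_zero i (hdne j)),
        one_smul]
    rw [Finset.sum_congr rfl this, Finset.sum_const, card_range,
      ← Nat.cast_smul_eq_nsmul ℂ, smul_smul, inv_mul_cancel₀ hnC, one_smul]
  -- trace of P j is a natural number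
  have htr : ∀ j, ∃ t : ℕ, LinearMap.trace ℂ V (P j) = (t : ℂ) := by
    intro j
    have hproj : LinearMap.IsProj (LinearMap.range (P j)) (P j) := by
      constructor
      · intro x; exact LinearMap.mem_range_self _ x
      · rintro x ⟨y, rfl⟩
        have := congrArg (fun f : Module.End ℂ V => f y) (hPP j)
        exact this
    exact ⟨Module.finrank ℂ (LinearMap.range (P j)), hproj.trace⟩
  choose t ht using htr
  refine ⟨d, t, hdn, fun k => ?_⟩
  have : V.character (g ^ k) = LinearMap.trace ℂ V (A ^ k) := by
    rw [FDRep.character, hA_def, map_pow]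
  rw [this]
  have hAk : A ^ k = ∑ j ∈ range n, d j ^ k • P j := by
    calc A ^ k = A ^ k * ∑ j ∈ range n, P j := by rw [hsumP, mul_one]
      _ = ∑ j ∈ range n, A ^ k * P j := Finset.mul_sum _ _ _
      _ = ∑ j ∈ range n, d j ^ k • P j := Finset.sum_congr rfl fun j _ => hAkP j k
  rw [hAk, map_sum]
  refine Finset.sum_congr rfl fun j _ => ?_
  rw [map_smul, ht j, smul_eq_mul, mul_comm]

/-- For a root of unity, conjugation is inversion, which is the (n-1)-st power. -/
lemma conj_rootOfUnity {n : ℕ} (hn : 0 < n) {z : ℂ} (hz : z ^ n = 1) :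
    (starRingEnd ℂ) z = z ^ (n - 1) := by
  have habs : ‖z‖ = 1 := by
    have h1 : ‖z‖ ^ n = 1 := by rw [← norm_pow, hz, norm_one]
    rcases lt_trichotomy (‖z‖) 1 with h | h | h
    · exact absurd h1 (by nlinarith [pow_lt_one₀ (norm_nonneg z) h hn.ne'])
    · exact h
    · exact absurd h1 (by nlinarith [one_lt_pow₀ h hn.ne'])
  have hmul : z * z ^ (n - 1) = 1 := by
    rw [← pow_succ', Nat.sub_add_cancel hn, hz]
  rw [← Complex.inv_eq_conj habs]
  exact (eq_inv_of_mul_eq_one_left (by rw [mul_comm] at hmul; exact hmul)).symm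

/-- Character of the inverse is the conjugate. -/
lemma char_inv {G : Type} [Group G] [Fintype G] (V : FDRep ℂ G) (g : G) :
    V.character g⁻¹ = (starRingEnd ℂ) (V.character g) := by
  obtain ⟨d, t, hdn, hk⟩ := char_pow_repr V g
  set n := orderOf g with hn_def
  have hn : 0 < n := orderOf_pos g
  have hginv : g⁻¹ = g ^ (n - 1) := by
    refine (eq_inv_of_mul_eq_one_left ?_).symm
    rw [← pow_succ, Nat.sub_add_cancel hn, hn_def, pow_orderOf_eq_one]
  have hg1 : V.character g = ∑ j ∈ range n, (t j : ℂ) * d j := by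
    have := hk 1; simpa using this
  rw [hginv, hk (n - 1), hg1, map_sum]
  refine Finset.sum_congr rfl fun j _ => ?_
  rw [map_mul, Complex.conj_natCast, conj_rootOfUnity hn (hdn j)]

open ArithmeticFunction in
/-- Sum over divisors of the Möbius function. -/
lemma sum_divisors_moebius_eq (m : ℕ) :
    ∑ e ∈ m.divisors, ArithmeticFunction.moebius e = if m = 1 then 1 else 0 := by
  have h := congrArg (fun f : ArithmeticFunction ℤ => f m)
    ArithmeticFunction.moebius_mul_coe_zeta
  rw [ArithmeticFunction.coe_mul_zeta_apply, ArithmeticFunction.one_apply] at h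
  exact h

/-- Ramanujan sums are integers. -/
lemma ramanujan_int {n : ℕ} (hn : 0 < n) {z : ℂ} (hz : z ^ n = 1) :
    ∃ m : ℤ, ∑ i ∈ (range n).filter n.Coprime, z ^ i = (m : ℂ) := by
  classical
  refine ⟨∑ e ∈ n.divisors, ArithmeticFunction.moebius e *
      (if z ^ e = 1 then ((n / e : ℕ) : ℤ) else 0), ?_⟩
  have step1 : ∑ i ∈ (range n).filter n.Coprime, z ^ i
      = ∑ i ∈ range n, (if n.Coprime i then (1 : ℂ) else 0) * z ^ i := by
    rw [Finset.sum_filter]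
    refine Finset.sum_congr rfl fun i _ => ?_
    split_ifs <;> simp
  have hdiv : ∀ i ∈ range n, (n.gcd i).divisors = n.divisors.filter (· ∣ i) := by
    intro i _
    ext e
    simp only [Nat.mem_divisors, Finset.mem_filter]
    constructor
    · rintro ⟨he, -⟩
      exact ⟨⟨(Nat.dvd_gcd_iff.mp he).1, hn.ne'⟩, (Nat.dvd_gcd_iff.mp he).2⟩
    · rintro ⟨⟨hen, -⟩, hei⟩
      exact ⟨Nat.dvd_gcd hen hei, fun h => hn.ne' (by simpa using Nat.eq_zero_of_gcd_eq_zero_left h)⟩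
  have step2 : ∀ i ∈ range n, (if n.Coprime i then (1 : ℂ) else 0)
      = ∑ e ∈ n.divisors.filter (· ∣ i), ((ArithmeticFunction.moebius e : ℤ) : ℂ) := by
    intro i hi
    rw [← hdiv i hi]
    have h2 := congrArg (fun r : ℤ => (r : ℂ)) (sum_divisors_moebius_eq (n.gcd i))
    simp only [Int.cast_sum] at h2
    rw [h2]
    unfold Nat.Coprime
    split_ifs <;> simp
  rw [step1, Finset.sum_congr rfl fun i hi => by rw [step2 i hi]]
  -- swap sums
  have step3 : ∑ i ∈ range n, (∑ e ∈ n.divisors.filter (· ∣ i),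
        ((ArithmeticFunction.moebius e : ℤ) : ℂ)) * z ^ i
      = ∑ e ∈ n.divisors, ((ArithmeticFunction.moebius e : ℤ) : ℂ) *
          ∑ i ∈ (range n).filter (e ∣ ·), z ^ i := by
    simp_rw [Finset.sum_filter, Finset.sum_mul, Finset.mul_sum]
    rw [Finset.sum_comm]
    refine Finset.sum_congr rfl fun e _ => Finset.sum_congr rfl fun i _ => ?_
    split_ifs <;> simp
  rw [step3, Int.cast_sum]
  refine Finset.sum_congr rfl fun e he => ?_
  obtain ⟨hen, -⟩ := Nat.mem_divisors.mp he
  have he0 : 0 < e := Nat.pos_of_dvd_of_pos hen hn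
  -- inner geometric sum over multiples of e
  have hinner : ∑ i ∈ (range n).filter (e ∣ ·), z ^ i = ∑ k ∈ range (n / e), (z ^ e) ^ k := by
    refine Finset.sum_nbij' (fun i => i / e) (fun k => e * k) ?_ ?_ ?_ ?_ ?_
    · intro i hi
      simp only [Finset.mem_filter, mem_range] at hi ⊢
      exact (Nat.lt_div_iff_mul_lt' hen _).mpr (by rw [Nat.mul_div_cancel' hi.2]; exact hi.1)
    · intro k hk
      simp only [mem_range] at hk
      simp only [Finset.mem_filter, mem_range]
      exact ⟨(Nat.lt_div_iff_mul_lt' hen _).mp hk, Dvd.intro k rfl⟩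
    · intro i hi
      simp only [Finset.mem_filter] at hi
      exact Nat.mul_div_cancel' hi.2
    · intro k _
      exact Nat.mul_div_cancel_left k he0
    · intro i hi
      simp only [Finset.mem_filter] at hi
      rw [← pow_mul, Nat.mul_div_cancel' hi.2]
  rw [hinner]
  have hze : (z ^ e) ^ (n / e) = 1 := by rw [← pow_mul, Nat.mul_div_cancel' hen, hz]
  rw [geom_sum_rootOfUnity hze]
  split_ifs with h
  · rw [Int.cast_mul, Int.cast_natCast]
  · simp

/-- Roots of unity are integral over ℤ. -/
lemma isIntegral_rootOfUnity {n : ℕ} (hn : 0 < n) {z : ℂ} (hz : z ^ n = 1) :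
    IsIntegral ℤ z := by
  refine ⟨Polynomial.X ^ n - Polynomial.C 1, Polynomial.monic_X_pow_sub_C 1 hn.ne', ?_⟩
  simp [hz]

/-- The character value at a rational element is an integer. -/
lemma char_val_int {G : Type} [Group G] [Fintype G] (V : FDRep ℂ G) (x : G)
    (hrat : IsRational x) : ∃ m : ℤ, V.character x = (m : ℂ) := by
  obtain ⟨d, t, hdn, hk⟩ := char_pow_repr V x
  set n := orderOf x with hn_def
  have hn : 0 < n := orderOf_pos x
  set s : ℂ := V.character x with hs_def
  have hs1 : s = ∑ j ∈ range n, (t j : ℂ) * d j := by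
    rw [hs_def]
    have := hk 1; simpa using this
  -- s is an algebraic integer
  have hint : IsIntegral ℤ s := by
    rw [hs1]
    refine IsIntegral.sum _ fun j _ => IsIntegral.mul ?_ (isIntegral_rootOfUnity hn (hdn j))
    have : ((t j : ℤ) : ℂ) = (t j : ℂ) := by push_cast; rfl
    rw [← this]
    exact isIntegral_algebraMap (x := (t j : ℤ))
  -- s is rational: totient * s is an integer
  obtain ⟨M, hM⟩ : ∃ M : ℤ, (Nat.totient n : ℂ) * s = (M : ℂ) := by
    have hconst : ∀ i ∈ (range n).filter n.Coprime, V.character (x ^ i) = s := by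
      intro i hi
      obtain ⟨-, hcop⟩ := Finset.mem_filter.mp hi
      have hicop : IsCoprime (i : ℤ) ((orderOf x : ℕ) : ℤ) := by
        rw [Nat.isCoprime_iff_coprime]
        exact (Nat.coprime_comm.mp hcop)
      have hconj := hrat i hicop
      rw [zpow_natCast] at hconj
      obtain ⟨c, hc⟩ := isConj_iff.mp hconj
      rw [hs_def, ← hc, FDRep.char_conj]
    have h1 : ∑ i ∈ (range n).filter n.Coprime, V.character (x ^ i)
        = (Nat.totient n : ℂ) * s := by
      rw [Finset.sum_congr rfl hconst, Finset.sum_const, Nat.totient_eq_card_coprime,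
        nsmul_eq_mul]
    choose m hm using fun j => ramanujan_int hn (hdn j)
    have h2 : ∑ i ∈ (range n).filter n.Coprime, V.character (x ^ i)
        = ((∑ j ∈ range n, (t j : ℤ) * m j : ℤ) : ℂ) := by
      rw [Finset.sum_congr rfl fun i _ => hk i, Finset.sum_comm]
      push_cast
      refine Finset.sum_congr rfl fun j _ => ?_
      rw [← Finset.mul_sum, hm j]
    exact ⟨_, by rw [← h1, h2]⟩
  have hφ : (Nat.totient n : ℂ) ≠ 0 := Nat.cast_ne_zero.mpr (Nat.totient_pos.mpr hn).ne'
  -- s equals a rational number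
  set q : ℚ := (M : ℚ) / (Nat.totient n : ℚ) with hq_def
  have hsq : s = (q : ℂ) := by
    rw [hq_def]
    push_cast
    field_simp
    rw [mul_comm] at hM
    exact hM
  -- a rational algebraic integer is an integer
  have hq_int : IsIntegral ℤ q := by
    have : algebraMap ℚ ℂ q = s := by rw [hsq]; exact eq_ratCast _ q
    rw [← isIntegral_algebraMap_iff ((algebraMap ℚ ℂ).injective : Function.Injective _)]
    rw [this]
    exact hint
  obtain ⟨y, hy⟩ := IsIntegrallyClosed.isIntegral_iff.mp hq_int
  refine ⟨y, ?_⟩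
  rw [hsq, ← hy]
  push_cast
  norm_num

open CategoryTheory in
/-- Unscaled orthogonality of irreducible characters. -/
lemma char_orthogonality {G : Type} [Group G] [Fintype G] (V W : FDRep ℂ G)
    [Simple V] [Simple W] :
    ∑ g : G, V.character g * W.character g⁻¹ =
      if Nonempty (V ≅ W) then (Fintype.card G : ℂ) else 0 := by
  haveI : Invertible ((Nat.card G : ℂ)) :=
    invertibleOfNonzero (Nat.cast_ne_zero.mpr Nat.card_pos.ne')
  have h := FDRep.char_orthonormal (k := ℂ) (G := G) V W
  have h2 := congrArg (fun z => ((Nat.card G : ℂ)) * z) h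
  simp only [← mul_assoc, one_mul,
    mul_ite, mul_one, mul_zero, Nat.card_eq_fintype_card, Nat.cast_one, Nat.cast_zero] at h2
  rw [mul_inv_cancel₀ (Nat.cast_ne_zero.mpr Fintype.card_ne_zero), one_mul] at h2
  exact h2

theorem sum_degrees_le {G : Type} [Group G] [Fintype G] [DecidableEq G]
    (Irr : Finset (G → ℂ)) (hIrr : ∀ χ, χ ∈ Irr ↔ IsIrrChar G χ)
    (x : G) (hrat : IsRational x) (hnv : ∀ χ ∈ Irr, χ x ≠ 0)
    (C : Finset G) (hC : ∀ g, g ∈ C ↔ IsConj x g) :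
    ∑ χ ∈ Irr, (χ 1).re ≤ (Nat.card G : ℝ) / Real.sqrt C.card := by

  have hV : ∀ i : {χ // χ ∈ Irr}, ∃ V : FDRep ℂ G,
      CategoryTheory.Simple V ∧ i.1 = V.character := fun i => (hIrr i.1).mp i.2
  choose V hs hchar using hV
  set N := Fintype.card G with hN_def
  have hN : 0 < N := Fintype.card_pos
  set sN : ℝ := Real.sqrt N with hsN_def
  have hsN : 0 < sN := Real.sqrt_pos.mpr (by exact_mod_cast hN)
  have hsNC : (sN : ℂ) ≠ 0 := by exact_mod_cast hsN.ne'
  have hsN2 : (sN : ℂ) * (sN : ℂ) = (N : ℂ) := by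
    rw [← Complex.ofReal_mul, Real.mul_self_sqrt (Nat.cast_nonneg N)]
    norm_num
  set u : {χ // χ ∈ Irr} → EuclideanSpace ℂ G :=
    fun i => WithLp.toLp 2 (fun g => i.1 g / (sN : ℂ)) with hu_def
  have hconj : ∀ (i : {χ // χ ∈ Irr}) (g : G),
      (starRingEnd ℂ) (i.1 g) = i.1 g⁻¹ := by
    intro i g
    rw [hchar i]
    exact (char_inv (V i) g).symm
  have horth : Orthonormal ℂ u := by
    rw [orthonormal_iff_ite]
    intro i j
    have : (inner ℂ (u i) (u j) : ℂ) = ∑ g : G, (starRingEnd ℂ) (u i g) * u j g := by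
      rw [PiLp.inner_apply]
      refine Finset.sum_congr rfl fun g _ => ?_
      rw [RCLike.inner_apply, mul_comm]
    rw [this]
    have hterm : ∀ g : G, (starRingEnd ℂ) (u i g) * u j g
        = ((V j).character g * (V i).character g⁻¹) / (N : ℂ) := by
      intro g
      rw [hu_def]
      dsimp only
      rw [map_div₀, Complex.conj_ofReal, hconj i g, div_mul_div_comm, hsN2,
        ← hchar i, ← hchar j]
      ring
    rw [Finset.sum_congr rfl fun g _ => hterm g, ← Finset.sum_div,
      char_orthogonality (V j) (V i)]
    haveI := hs i
    haveI := hs j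
    split_ifs with hiso hij hij
    · rw [div_self (Nat.cast_ne_zero.mpr hN.ne')]
    · -- V j ≅ V i but i ≠ j: contradiction
      exfalso
      obtain ⟨e⟩ := hiso
      exact hij (Subtype.ext (by rw [hchar i, hchar j, FDRep.char_iso e]))
    · exfalso
      subst hij
      exact hiso ⟨CategoryTheory.Iso.refl _⟩
    · exact zero_div _
  -- degrees
  set a : {χ // χ ∈ Irr} → ℝ := fun i => (i.1 1).re with ha_def
  have hdeg : ∀ i, (i.1 1 : ℂ) = ((a i : ℝ) : ℂ) := by
    intro i
    rw [ha_def]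
    dsimp only
    rw [hchar i, FDRep.char_one]
    norm_num
  have ha_nonneg : ∀ i, 0 ≤ a i := by
    intro i
    rw [ha_def]
    dsimp only
    rw [hchar i, FDRep.char_one]
    norm_num
  -- Bessel with indicator of the identity: sum of squared degrees
  have hb1 : ∑ i : {χ // χ ∈ Irr}, a i ^ 2 ≤ (N : ℝ) := by
    set x₁ : EuclideanSpace ℂ G := WithLp.toLp 2 (fun g : G => if g = 1 then (sN : ℂ) else 0) with hx1_def
    have hinner : ∀ i, (inner ℂ (u i) x₁ : ℂ) = ((a i : ℝ) : ℂ) := by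
      intro i
      rw [PiLp.inner_apply]
      have : ∀ g : G, (inner ℂ (u i g) (x₁ g) : ℂ)
          = if g = 1 then (starRingEnd ℂ) (u i 1) * (sN : ℂ) else 0 := by
        intro g
        rw [RCLike.inner_apply, hx1_def]
        dsimp only
        split_ifs with h
        · rw [h, mul_comm]
        · rw [zero_mul]
      rw [Finset.sum_congr rfl fun g _ => this g, Finset.sum_ite_eq' univ (1 : G)]
      simp only [mem_univ, if_true]
      rw [hu_def]
      dsimp only
      rw [map_div₀, Complex.conj_ofReal, div_mul_cancel₀ _ hsNC, hdeg i, Complex.conj_ofReal]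
    have hnorm : ‖x₁‖ ^ 2 = (N : ℝ) := by
      rw [EuclideanSpace.norm_eq, Real.sq_sqrt (by positivity)]
      rw [hx1_def]
      simp only
      have hite : ∀ g : G, ‖if g = 1 then (sN : ℂ) else 0‖ ^ 2
          = if g = 1 then ‖(sN : ℂ)‖ ^ 2 else 0 := by
        intro g; split_ifs <;> simp
      rw [Finset.sum_congr rfl fun g _ => hite g, Finset.sum_ite_eq' univ (1 : G)]
      simp only [mem_univ, if_true, Complex.norm_real, Real.norm_eq_abs]
      rw [abs_of_nonneg hsN.le, hsN_def, Real.sq_sqrt (Nat.cast_nonneg N)]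
    have hb := horth.sum_inner_products_le (s := univ) x₁
    rw [Finset.sum_congr rfl fun i _ => by rw [hinner i]] at hb
    rw [hnorm] at hb
    calc ∑ i : {χ // χ ∈ Irr}, a i ^ 2
        = ∑ i : {χ // χ ∈ Irr}, ‖((a i : ℝ) : ℂ)‖ ^ 2 := by
          refine Finset.sum_congr rfl fun i _ => ?_
          rw [Complex.norm_real, Real.norm_eq_abs, abs_of_nonneg (ha_nonneg i)]
      _ ≤ (N : ℝ) := hb
  -- conjugacy class
  have hxC : x ∈ C := (hC x).mpr (IsConj.refl x)
  set c : ℕ := C.card with hc_def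
  have hc : 0 < c := Finset.card_pos.mpr ⟨x, hxC⟩
  have hcR : (0 : ℝ) < (c : ℝ) := by exact_mod_cast hc
  set t : {χ // χ ∈ Irr} → ℝ := fun i => ‖i.1 x‖ with ht_def
  have hconstC : ∀ (i : {χ // χ ∈ Irr}), ∀ g ∈ C, i.1 g = i.1 x := by
    intro i g hg
    obtain ⟨cc, hcc⟩ := isConj_iff.mp ((hC g).mp hg)
    rw [hchar i, ← hcc, FDRep.char_conj]
  -- Bessel with the indicator of the conjugacy class
  have hb2 : ∑ i : {χ // χ ∈ Irr}, t i ^ 2 ≤ (N : ℝ) / (c : ℝ) := by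
    set x₂ : EuclideanSpace ℂ G := WithLp.toLp 2 (fun g : G => if g ∈ C then (1 : ℂ) else 0) with hx2_def
    have hinner : ∀ i, (inner ℂ (u i) x₂ : ℂ)
        = (c : ℂ) * (starRingEnd ℂ) (i.1 x) / (sN : ℂ) := by
      intro i
      rw [PiLp.inner_apply]
      have hterm : ∀ g : G, (inner ℂ (u i g) (x₂ g) : ℂ)
          = if g ∈ C then (starRingEnd ℂ) (i.1 x) / (sN : ℂ) else 0 := by
        intro g
        rw [RCLike.inner_apply, hx2_def]
        dsimp only
        split_ifs with h
        · rw [one_mul, hu_def]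
          dsimp only
          rw [map_div₀, Complex.conj_ofReal, hconstC i g h]
        · rw [zero_mul]
      rw [Finset.sum_congr rfl fun g _ => hterm g, Finset.sum_ite_mem, Finset.univ_inter,
        Finset.sum_const, nsmul_eq_mul, mul_div_assoc]
    have hnorm : ‖x₂‖ ^ 2 = (c : ℝ) := by
      rw [EuclideanSpace.norm_eq, Real.sq_sqrt (by positivity), hx2_def]
      simp only
      have hite : ∀ g : G, ‖if g ∈ C then (1 : ℂ) else 0‖ ^ 2
          = if g ∈ C then (1 : ℝ) else 0 := by
        intro g; split_ifs <;> simp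
      rw [Finset.sum_congr rfl fun g _ => hite g, Finset.sum_ite_mem, Finset.univ_inter,
        Finset.sum_const, nsmul_eq_mul, mul_one]
    have hb := horth.sum_inner_products_le (s := univ) x₂
    rw [Finset.sum_congr rfl fun i _ => by rw [hinner i], hnorm] at hb
    have hbnorm : ∀ i, ‖(c : ℂ) * (starRingEnd ℂ) (i.1 x) / (sN : ℂ)‖ ^ 2
        = (c : ℝ) ^ 2 / (N : ℝ) * t i ^ 2 := by
      intro i
      rw [norm_div, norm_mul, RCLike.norm_conj, Complex.norm_natCast, Complex.norm_real,
        Real.norm_eq_abs, abs_of_nonneg hsN.le, div_pow, mul_pow, hsN_def,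
        Real.sq_sqrt (Nat.cast_nonneg N), ht_def]
      ring
    rw [Finset.sum_congr rfl fun i _ => by rw [hbnorm i], ← Finset.mul_sum] at hb
    have hNR : (0 : ℝ) < (N : ℝ) := by exact_mod_cast hN
    calc ∑ i : {χ // χ ∈ Irr}, t i ^ 2
        = ((N : ℝ) / (c : ℝ) ^ 2) * ((c : ℝ) ^ 2 / (N : ℝ) *
            ∑ i : {χ // χ ∈ Irr}, t i ^ 2) := by field_simp
      _ ≤ ((N : ℝ) / (c : ℝ) ^ 2) * (c : ℝ) := by
          exact mul_le_mul_of_nonneg_left hb (div_nonneg (Nat.cast_nonneg N) (sq_nonneg _))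
      _ = (N : ℝ) / (c : ℝ) := by field_simp
  -- each |χ(x)| is at least 1
  have ht1 : ∀ i, 1 ≤ t i := by
    intro i
    obtain ⟨m, hm⟩ := char_val_int (V i) x hrat
    have hm' : i.1 x = (m : ℂ) := by rw [hchar i]; exact hm
    have hm0 : m ≠ 0 := by
      intro h
      exact hnv i.1 i.2 (by rw [hm', h]; norm_num)
    rw [ht_def]
    dsimp only
    rw [hm']
    have h1 : ((m : ℤ) : ℂ) = (((m : ℤ) : ℝ) : ℂ) := by push_cast; rfl
    rw [h1, Complex.norm_real, Real.norm_eq_abs, ← Int.cast_abs]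
    exact_mod_cast Int.one_le_abs hm0
  -- assemble
  have hS : ∑ χ ∈ Irr, ((χ 1).re) = ∑ i : {χ // χ ∈ Irr}, a i := (Finset.sum_coe_sort Irr _).symm
  have hstepA : ∑ i : {χ // χ ∈ Irr}, a i ≤ ∑ i : {χ // χ ∈ Irr}, a i * t i :=
    Finset.sum_le_sum fun i _ => le_mul_of_one_le_right (ha_nonneg i) (ht1 i)
  have hCS : (∑ i : {χ // χ ∈ Irr}, a i * t i) ^ 2
      ≤ (∑ i : {χ // χ ∈ Irr}, a i ^ 2) * ∑ i : {χ // χ ∈ Irr}, t i ^ 2 :=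
    Finset.sum_mul_sq_le_sq_mul_sq _ _ _
  have hSnn : 0 ≤ ∑ i : {χ // χ ∈ Irr}, a i := Finset.sum_nonneg fun i _ => ha_nonneg i
  have hfinal : (∑ i : {χ // χ ∈ Irr}, a i) ^ 2 ≤ (N : ℝ) ^ 2 / (c : ℝ) := by
    calc (∑ i : {χ // χ ∈ Irr}, a i) ^ 2
        ≤ (∑ i : {χ // χ ∈ Irr}, a i * t i) ^ 2 := pow_le_pow_left₀ hSnn hstepA 2
      _ ≤ (∑ i : {χ // χ ∈ Irr}, a i ^ 2) * ∑ i : {χ // χ ∈ Irr}, t i ^ 2 := hCS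
      _ ≤ (N : ℝ) * ((N : ℝ) / (c : ℝ)) := by
          refine mul_le_mul hb1 hb2 (Finset.sum_nonneg fun i _ => sq_nonneg _)
            (Nat.cast_nonneg N)
      _ = (N : ℝ) ^ 2 / (c : ℝ) := by ring
  rw [Nat.card_eq_fintype_card, ← hN_def, hS]
  have hsqrt : (N : ℝ) / Real.sqrt c = Real.sqrt ((N : ℝ) ^ 2 / (c : ℝ)) := by
    rw [Real.sqrt_div (by positivity) _, Real.sqrt_sq (Nat.cast_nonneg N)]
  rw [hsqrt]
  exact (Real.le_sqrt hSnn (div_nonneg (sq_nonneg _) hcR.le)).mpr hfinal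

end
end
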